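/- arXiv:2409.02063 — 2 statements merged into one kernel-verified Lean document; each statement's English description precedes it below -/
import Mathlib

section
/- For every natural number B ≥ 2, the permutation σ = A ∘ I of the 2B positions (apply the inter-bus layer I first, then the intra-bus layer A) fixes the position 2B−1 and acts on the remaining 2B−1 positions as a single cycle of length 2B−1; in particular, σ has order 2B−1, so the configuration of columns repeats after 2B−1 double-steps. -/
set_option linter.unusedTactic false


/-- The inter-bus layer `I` on the `2B` positions of the busNNN column model:
the product of the transpositions `(2j+1, 2j+2)` for `j = 0, …, B-2`. -/
def interLayer (B : ℕ) : Equiv.Perm (Fin (2 * B)) :=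
  ((List.range (B - 1)).attach.map (fun j =>
    Equiv.swap ⟨2 * j.1 + 1, by have := List.mem_range.mp j.2; omega⟩
               ⟨2 * j.1 + 2, by have := List.mem_range.mp j.2; omega⟩)).prod

/-- The intra-bus layer `A` on the `2B` positions of the busNNN column model:
the product of the transpositions `(2j, 2j+1)` for `j = 0, …, B-2`
(i.e. on every bus except the last). -/
def intraLayer (B : ℕ) : Equiv.Perm (Fin (2 * B)) :=
  ((List.range (B - 1)).attach.map (fun j =>
    Equiv.swap ⟨2 * j.1, by have := List.mem_range.mp j.2; omega⟩
               ⟨2 * j.1 + 1, by have := List.mem_range.mp j.2; omega⟩)).prod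

/-- auxiliary: the `j`-th swap of the inter layer, totalized. -/
def gI (B j : ℕ) : Equiv.Perm (Fin (2 * B)) :=
  if h : 2 * j + 2 < 2 * B then Equiv.swap ⟨2 * j + 1, by omega⟩ ⟨2 * j + 2, h⟩ else 1

/-- auxiliary: the `j`-th swap of the intra layer, totalized. -/
def gA (B j : ℕ) : Equiv.Perm (Fin (2 * B)) :=
  if h : 2 * j + 1 < 2 * B then Equiv.swap ⟨2 * j, by omega⟩ ⟨2 * j + 1, h⟩ else 1

lemma interLayer_eq (B : ℕ) :
    interLayer B = ((List.range (B - 1)).map (gI B)).prod := by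
  unfold interLayer
  congr 1
  conv_rhs => rw [← List.attach_map_val (l := List.range (B - 1)) (f := gI B)]
  refine List.map_congr_left ?_
  rintro ⟨j, hj⟩ -
  have hj' := List.mem_range.mp hj
  simp only [gI]
  rw [dif_pos (by omega)]

lemma intraLayer_eq (B : ℕ) :
    intraLayer B = ((List.range (B - 1)).map (gA B)).prod := by
  unfold intraLayer
  congr 1
  conv_rhs => rw [← List.attach_map_val (l := List.range (B - 1)) (f := gA B)]
  refine List.map_congr_left ?_
  rintro ⟨j, hj⟩ -
  have hj' := List.mem_range.mp hj
  simp only [gA]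
  rw [dif_pos (by omega)]

lemma prodI_apply (B n : ℕ) (hn : 2 * n + 2 ≤ 2 * B) (x : Fin (2 * B)) :
    (((List.range n).map (gI B)).prod x).1 =
      if x.1 % 2 = 1 ∧ x.1 < 2 * n then x.1 + 1
      else if x.1 % 2 = 0 ∧ 1 ≤ x.1 ∧ x.1 ≤ 2 * n then x.1 - 1
      else x.1 := by
  induction n generalizing x with
  | zero =>
    simp only [List.range_zero, List.map_nil, List.prod_nil, Equiv.Perm.one_apply]
    (try simp only [Fin.val_mk]); split_ifs <;> first | exact (False.elim (by assumption)) | omega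
  | succ n ih =>
    rw [List.range_succ, List.map_append, List.prod_append]
    simp only [List.map_cons, List.map_nil, List.prod_cons, List.prod_nil, mul_one]
    rw [Equiv.Perm.mul_apply]
    have hg : gI B n = Equiv.swap ⟨2 * n + 1, by omega⟩ ⟨2 * n + 2, by omega⟩ := by
      rw [gI, dif_pos (by omega)]
    rw [hg]
    rcases eq_or_ne x.1 (2 * n + 1) with h1 | h1
    · have hx : x = ⟨2 * n + 1, by omega⟩ := Fin.ext h1
      rw [hx, Equiv.swap_apply_left, ih (by omega)]
      (try simp only [Fin.val_mk]); split_ifs <;> first | exact (False.elim (by assumption)) | omega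
    · rcases eq_or_ne x.1 (2 * n + 2) with h2 | h2
      · have hx : x = ⟨2 * n + 2, by omega⟩ := Fin.ext h2
        rw [hx, Equiv.swap_apply_right, ih (by omega)]
        (try simp only [Fin.val_mk]); split_ifs <;> first | exact (False.elim (by assumption)) | omega
      · rw [Equiv.swap_apply_of_ne_of_ne (Fin.ne_of_val_ne h1) (Fin.ne_of_val_ne h2),
          ih (by omega)]
        (try simp only [Fin.val_mk]); split_ifs <;> first | exact (False.elim (by assumption)) | omega

lemma prodA_apply (B n : ℕ) (hn : 2 * n + 2 ≤ 2 * B) (x : Fin (2 * B)) :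
    (((List.range n).map (gA B)).prod x).1 =
      if x.1 % 2 = 0 ∧ x.1 < 2 * n then x.1 + 1
      else if x.1 % 2 = 1 ∧ x.1 < 2 * n then x.1 - 1
      else x.1 := by
  induction n generalizing x with
  | zero =>
    simp only [List.range_zero, List.map_nil, List.prod_nil, Equiv.Perm.one_apply]
    (try simp only [Fin.val_mk]); split_ifs <;> first | exact (False.elim (by assumption)) | omega
  | succ n ih =>
    rw [List.range_succ, List.map_append, List.prod_append]
    simp only [List.map_cons, List.map_nil, List.prod_cons, List.prod_nil, mul_one]
    rw [Equiv.Perm.mul_apply]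
    have hg : gA B n = Equiv.swap ⟨2 * n, by omega⟩ ⟨2 * n + 1, by omega⟩ := by
      rw [gA, dif_pos (by omega)]
    rw [hg]
    rcases eq_or_ne x.1 (2 * n) with h1 | h1
    · have hx : x = ⟨2 * n, by omega⟩ := Fin.ext h1
      rw [hx, Equiv.swap_apply_left, ih (by omega)]
      (try simp only [Fin.val_mk]); split_ifs <;> first | exact (False.elim (by assumption)) | omega
    · rcases eq_or_ne x.1 (2 * n + 1) with h2 | h2
      · have hx : x = ⟨2 * n + 1, by omega⟩ := Fin.ext h2
        rw [hx, Equiv.swap_apply_right, ih (by omega)]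
        (try simp only [Fin.val_mk]); split_ifs <;> first | exact (False.elim (by assumption)) | omega
      · rw [Equiv.swap_apply_of_ne_of_ne (Fin.ne_of_val_ne h1) (Fin.ne_of_val_ne h2),
          ih (by omega)]
        (try simp only [Fin.val_mk]); split_ifs <;> first | exact (False.elim (by assumption)) | omega

/-- the value-level action of `σ = A * I`. -/
def Fσ (B : ℕ) : ℕ → ℕ := fun x =>
  if x = 2 * B - 1 then x
  else if x % 2 = 1 then min (x + 2) (2 * B - 2)
  else if x = 0 then 1 else x - 2

lemma sigma_val (B : ℕ) (hB : 2 ≤ B) (x : Fin (2 * B)) :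
    ((intraLayer B * interLayer B) x).1 = Fσ B x.1 := by
  rw [Equiv.Perm.mul_apply, interLayer_eq, intraLayer_eq]
  have h1 := prodI_apply B (B - 1) (by omega) x
  have h2 := prodA_apply B (B - 1) (by omega)
    (((List.range (B - 1)).map (gI B)).prod x)
  rw [h1] at h2
  rw [h2]
  have hx := x.isLt
  unfold Fσ
  (try simp only [Fin.val_mk]); split_ifs <;> first | exact (False.elim (by assumption)) | omega

lemma sigma_fix_iff (B : ℕ) (hB : 2 ≤ B) (x : Fin (2 * B)) :
    (intraLayer B * interLayer B) x = x ↔ x.1 = 2 * B - 1 := by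
  rw [Fin.ext_iff, sigma_val B hB]
  have hx := x.isLt
  unfold Fσ
  (try simp only [Fin.val_mk]); split_ifs <;> first | exact (False.elim (by assumption)) | omega

/-- the orbit of position `0` under `σ`. -/
def orb (B k : ℕ) : ℕ :=
  if k = 0 then 0 else if k ≤ B - 1 then 2 * k - 1 else 2 * (2 * B - 1 - k)

lemma orb_step (B : ℕ) (hB : 2 ≤ B) (k : ℕ) (hk : k < 2 * B - 2) :
    Fσ B (orb B k) = orb B (k + 1) := by
  unfold Fσ orb
  (try simp only [Fin.val_mk]); split_ifs <;> first | exact (False.elim (by assumption)) | omega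

lemma pow_orb (B : ℕ) (hB : 2 ≤ B) (k : ℕ) (hk : k ≤ 2 * B - 2) :
    (((intraLayer B * interLayer B) ^ k) ⟨0, by omega⟩).1 = orb B k := by
  induction k with
  | zero => simp [orb]
  | succ k ih =>
    rw [pow_succ', Equiv.Perm.mul_apply, sigma_val B hB, ih (by omega),
      orb_step B hB k (by omega)]

/-- For every `B ≥ 2`, the double-step permutation `σ = A ∘ I`
(apply `I` first, then `A`) fixes position `2B - 1` and acts on the remaining
`2B - 1` positions as a single cycle of length `2B - 1`; in particular `σ` has
order `2B - 1`. -/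
theorem busNNN_double_step_cycle (B : ℕ) (hB : 2 ≤ B) :
    (intraLayer B * interLayer B) ⟨2 * B - 1, by omega⟩ = ⟨2 * B - 1, by omega⟩ ∧
    (intraLayer B * interLayer B).IsCycle ∧
    (intraLayer B * interLayer B).support = Finset.univ.erase ⟨2 * B - 1, by omega⟩ ∧
    orderOf (intraLayer B * interLayer B) = 2 * B - 1 := by
  have hfix : ∀ x : Fin (2 * B),
      (intraLayer B * interLayer B) x = x ↔ x.1 = 2 * B - 1 := sigma_fix_iff B hB
  have h0 : (0 : ℕ) < 2 * B := by omega
  have hcyc : (intraLayer B * interLayer B).IsCycle := by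
    refine ⟨⟨0, h0⟩, ?_, ?_⟩
    · rw [Ne, hfix]
      simp only [Fin.val_mk]
      omega
    · intro y hy
      have hy' : y.1 ≠ 2 * B - 1 := fun h => hy ((hfix y).mpr h)
      have hylt := y.isLt
      obtain ⟨k, hk, hok⟩ : ∃ k, k ≤ 2 * B - 2 ∧ orb B k = y.1 := by
        refine ⟨if y.1 % 2 = 1 then (y.1 + 1) / 2
          else if y.1 = 0 then 0 else 2 * B - 1 - y.1 / 2, ?_, ?_⟩
        · split_ifs <;> omega
        · unfold orb; split_ifs <;> first | exact (False.elim (by assumption)) | omega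
      exact ⟨(k : ℤ), by
        rw [zpow_natCast]
        exact Fin.ext (by rw [pow_orb B hB k hk, hok])⟩
  have hsupp : (intraLayer B * interLayer B).support
      = Finset.univ.erase ⟨2 * B - 1, by omega⟩ := by
    ext x
    simp only [Equiv.Perm.mem_support, Finset.mem_erase, Finset.mem_univ, and_true]
    rw [Ne, hfix, Ne, Fin.ext_iff]
  refine ⟨Fin.ext ?_, hcyc, hsupp, ?_⟩
  · rw [sigma_val B hB]
    unfold Fσ
    simp
  · rw [hcyc.orderOf, hsupp, Finset.card_erase_of_mem (Finset.mem_univ _),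
      Finset.card_univ, Fintype.card_fin]
end

section
/- For every natural number B ≥ 2 and every bus j ∈ {0,…,B−1}, the unordered pairs of columns occupying bus j at the successive double-steps of the busNNN swap strategy are pairwise distinct over one full period: the map sending t ∈ {0,…,2B−2} to the unordered pair {σ^{−t}(2j), σ^{−t}(2j+1)} is injective, where σ = A ∘ I. -/
private lemma prod_map_fix {ι α : Type*} (l : List ι) (f : ι → Equiv.Perm α) (x : α)
    (h : ∀ i ∈ l, f i x = x) : (l.map f).prod x = x := by
  induction l with
  | nil => simp
  | cons i l ih =>
    simp only [List.map_cons, List.prod_cons, Equiv.Perm.mul_apply]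
    rw [ih (fun i hi => h i (List.mem_cons_of_mem _ hi)), h i (List.mem_cons_self)]

private lemma prod_map_single {ι α : Type*} (l : List ι) (f : ι → Equiv.Perm α) (x : α)
    (i₀ : ι) (h₀ : i₀ ∈ l) (hnd : l.Nodup)
    (hx : ∀ i ∈ l, i ≠ i₀ → f i x = x)
    (hfx : ∀ i ∈ l, i ≠ i₀ → f i (f i₀ x) = f i₀ x) :
    (l.map f).prod x = f i₀ x := by
  induction l with
  | nil => simp at h₀
  | cons i l ih =>
    simp only [List.map_cons, List.prod_cons, Equiv.Perm.mul_apply]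
    rcases List.mem_cons.mp h₀ with rfl | h₀'
    · rw [prod_map_fix l f x (fun i' hi' => hx i' (List.mem_cons_of_mem _ hi')
        (fun he => (List.nodup_cons.mp hnd).1 (he ▸ hi')))]
    · have hne : i ≠ i₀ := fun he => (List.nodup_cons.mp hnd).1 (he ▸ h₀')
      rw [ih h₀' (List.nodup_cons.mp hnd).2
        (fun i' hi' => hx i' (List.mem_cons_of_mem _ hi'))
        (fun i' hi' => hfx i' (List.mem_cons_of_mem _ hi')),
        hfx i (List.mem_cons_self) hne]


/-- the inter layer as a function on positions -/
def iFun (B c : ℕ) : ℕ :=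
  if c = 0 ∨ c = 2 * B - 1 then c else if c % 2 = 1 then c + 1 else c - 1

/-- the intra layer as a function on positions -/
def aFun (B c : ℕ) : ℕ :=
  if 2 * B - 2 ≤ c then c else if c % 2 = 0 then c + 1 else c - 1

private lemma nodup_attach_range (n : ℕ) : (List.range n).attach.Nodup :=
  List.nodup_attach.mpr (List.nodup_range)

private lemma interLayer_apply (B : ℕ) (c : Fin (2 * B)) :
    ((interLayer B) c).1 = iFun B c.1 := by
  have hc := c.2
  unfold interLayer iFun
  by_cases h0 : c.1 = 0 ∨ c.1 = 2 * B - 1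
  · rw [prod_map_fix]
    · simp [h0]
    · rintro ⟨i, hi⟩ -
      have hi' := List.mem_range.mp hi
      apply Equiv.swap_apply_of_ne_of_ne <;>
        · intro he; rw [Fin.ext_iff] at he; simp at he; omega
  · push_neg at h0
    by_cases hodd : c.1 % 2 = 1
    · obtain ⟨jj, hjj, hcj⟩ : ∃ jj, jj < B - 1 ∧ c.1 = 2 * jj + 1 :=
        ⟨(c.1 - 1) / 2, by omega, by omega⟩
      have hc' : c = ⟨2 * jj + 1, by omega⟩ := Fin.ext (by simpa using hcj)
      rw [prod_map_single _ _ _ ⟨jj, List.mem_range.mpr hjj⟩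
          (List.mem_attach _ _) (nodup_attach_range _) ?_ ?_]
      · rw [hc', Equiv.swap_apply_left]
        simp
        omega
      · rintro ⟨i, hi⟩ - hne
        have hi' := List.mem_range.mp hi
        have : i ≠ jj := fun h => hne (Subtype.ext h)
        apply Equiv.swap_apply_of_ne_of_ne <;>
          · intro he; rw [Fin.ext_iff] at he; simp at he; omega
      · rintro ⟨i, hi⟩ - hne
        have hi' := List.mem_range.mp hi
        have : i ≠ jj := fun h => hne (Subtype.ext h)
        rw [hc', Equiv.swap_apply_left]
        apply Equiv.swap_apply_of_ne_of_ne <;>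
          · intro he; rw [Fin.ext_iff] at he; simp at he; omega
    · obtain ⟨jj, hjj, hcj⟩ : ∃ jj, jj < B - 1 ∧ c.1 = 2 * jj + 2 :=
        ⟨c.1 / 2 - 1, by omega, by omega⟩
      have hc' : c = ⟨2 * jj + 2, by omega⟩ := Fin.ext (by simpa using hcj)
      rw [prod_map_single _ _ _ ⟨jj, List.mem_range.mpr hjj⟩
          (List.mem_attach _ _) (nodup_attach_range _) ?_ ?_]
      · rw [hc', Equiv.swap_apply_right]
        simp
        omega
      · rintro ⟨i, hi⟩ - hne
        have hi' := List.mem_range.mp hi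
        have : i ≠ jj := fun h => hne (Subtype.ext h)
        apply Equiv.swap_apply_of_ne_of_ne <;>
          · intro he; rw [Fin.ext_iff] at he; simp at he; omega
      · rintro ⟨i, hi⟩ - hne
        have hi' := List.mem_range.mp hi
        have : i ≠ jj := fun h => hne (Subtype.ext h)
        rw [hc', Equiv.swap_apply_right]
        apply Equiv.swap_apply_of_ne_of_ne <;>
          · intro he; rw [Fin.ext_iff] at he; simp at he; omega

private lemma intraLayer_apply (B : ℕ) (c : Fin (2 * B)) :
    ((intraLayer B) c).1 = aFun B c.1 := by
  have hc := c.2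
  unfold intraLayer aFun
  by_cases h0 : 2 * B - 2 ≤ c.1
  · rw [prod_map_fix]
    · simp [h0]
    · rintro ⟨i, hi⟩ -
      have hi' := List.mem_range.mp hi
      apply Equiv.swap_apply_of_ne_of_ne <;>
        · intro he; rw [Fin.ext_iff] at he; simp at he; omega
  · push_neg at h0
    by_cases heven : c.1 % 2 = 0
    · obtain ⟨jj, hjj, hcj⟩ : ∃ jj, jj < B - 1 ∧ c.1 = 2 * jj :=
        ⟨c.1 / 2, by omega, by omega⟩
      have hc' : c = ⟨2 * jj, by omega⟩ := Fin.ext (by simpa using hcj)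
      rw [prod_map_single _ _ _ ⟨jj, List.mem_range.mpr hjj⟩
          (List.mem_attach _ _) (nodup_attach_range _) ?_ ?_]
      · rw [hc', Equiv.swap_apply_left]
        simp
        omega
      · rintro ⟨i, hi⟩ - hne
        have hi' := List.mem_range.mp hi
        have : i ≠ jj := fun h => hne (Subtype.ext h)
        apply Equiv.swap_apply_of_ne_of_ne <;>
          · intro he; rw [Fin.ext_iff] at he; simp at he; omega
      · rintro ⟨i, hi⟩ - hne
        have hi' := List.mem_range.mp hi
        have : i ≠ jj := fun h => hne (Subtype.ext h)
        rw [hc', Equiv.swap_apply_left]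
        apply Equiv.swap_apply_of_ne_of_ne <;>
          · intro he; rw [Fin.ext_iff] at he; simp at he; omega
    · obtain ⟨jj, hjj, hcj⟩ : ∃ jj, jj < B - 1 ∧ c.1 = 2 * jj + 1 :=
        ⟨(c.1 - 1) / 2, by omega, by omega⟩
      have hc' : c = ⟨2 * jj + 1, by omega⟩ := Fin.ext (by simpa using hcj)
      rw [prod_map_single _ _ _ ⟨jj, List.mem_range.mpr hjj⟩
          (List.mem_attach _ _) (nodup_attach_range _) ?_ ?_]
      · rw [hc', Equiv.swap_apply_right]
        simp
        omega
      · rintro ⟨i, hi⟩ - hne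
        have hi' := List.mem_range.mp hi
        have : i ≠ jj := fun h => hne (Subtype.ext h)
        apply Equiv.swap_apply_of_ne_of_ne <;>
          · intro he; rw [Fin.ext_iff] at he; simp at he; omega
      · rintro ⟨i, hi⟩ - hne
        have hi' := List.mem_range.mp hi
        have : i ≠ jj := fun h => hne (Subtype.ext h)
        rw [hc', Equiv.swap_apply_right]
        apply Equiv.swap_apply_of_ne_of_ne <;>
          · intro he; rw [Fin.ext_iff] at he; simp at he; omega

private def phiF (B k : ℕ) : ℕ :=
  if k = 0 then 0 else if k ≤ B - 1 then 2 * k - 1 else 2 * (2 * B - 1 - k)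

private lemma phiF_lt (B k : ℕ) (hB : 2 ≤ B) (hk : k < 2 * B - 1) :
    phiF B k < 2 * B - 1 := by
  unfold phiF; split_ifs <;> first | omega | exact (‹False›).elim

private def phi (B : ℕ) (hB : 2 ≤ B) (k : ℕ) : Fin (2 * B) :=
  ⟨phiF B (k % (2 * B - 1)), by
    have := phiF_lt B (k % (2 * B - 1)) hB (Nat.mod_lt _ (by omega)); omega⟩

private lemma phi_val (B : ℕ) (hB : 2 ≤ B) (k : ℕ) :
    (phi B hB k).1 = phiF B (k % (2 * B - 1)) := rfl

private lemma phi_mod (B : ℕ) (hB : 2 ≤ B) (k : ℕ) :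
    phi B hB (k + (2 * B - 1)) = phi B hB k := by
  apply Fin.ext; rw [phi_val, phi_val, Nat.add_mod_right]

private lemma step_nat (B x : ℕ) (hB : 2 ≤ B) (hx : x < 2 * B - 1) :
    aFun B (iFun B (phiF B x)) = phiF B ((x + 1) % (2 * B - 1)) := by
  rcases Nat.lt_or_ge (x + 1) (2 * B - 1) with h | h
  · rw [Nat.mod_eq_of_lt h]
    unfold phiF iFun aFun
    split_ifs <;> first | omega | exact (‹False›).elim
  · have hx1 : x = 2 * B - 2 := by omega
    subst hx1
    have h0 : (2 * B - 2 + 1) % (2 * B - 1) = 0 := by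
      have e : 2 * B - 2 + 1 = 2 * B - 1 := by omega
      rw [e, Nat.mod_self]
    rw [h0]
    unfold phiF iFun aFun
    split_ifs <;> first | omega | exact (‹False›).elim

private lemma sigma_val_s7 (B : ℕ) (c : Fin (2 * B)) :
    ((intraLayer B * interLayer B) c).1 = aFun B (iFun B c.1) := by
  rw [Equiv.Perm.mul_apply, intraLayer_apply, interLayer_apply]

private lemma sigma_phi (B : ℕ) (hB : 2 ≤ B) (k : ℕ) :
    (intraLayer B * interLayer B) (phi B hB k) = phi B hB (k + 1) := by
  apply Fin.ext
  rw [sigma_val_s7, phi_val, phi_val,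
    step_nat B _ hB (Nat.mod_lt _ (by omega)), Nat.mod_add_mod]

private lemma sigma_top (B : ℕ) (hB : 2 ≤ B) :
    (intraLayer B * interLayer B) ⟨2 * B - 1, by omega⟩ = ⟨2 * B - 1, by omega⟩ := by
  apply Fin.ext
  rw [sigma_val_s7]
  show aFun B (iFun B (2 * B - 1)) = 2 * B - 1
  unfold iFun aFun; split_ifs <;> first | omega | exact (‹False›).elim

private lemma sigma_inv_phi (B : ℕ) (hB : 2 ≤ B) (k : ℕ) :
    (intraLayer B * interLayer B)⁻¹ (phi B hB k) = phi B hB (k + (2 * B - 2)) := by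
  have h := sigma_phi B hB (k + (2 * B - 2))
  have e : k + (2 * B - 2) + 1 = k + (2 * B - 1) := by omega
  rw [e, phi_mod] at h
  rw [← h, Equiv.Perm.inv_def, Equiv.symm_apply_apply]

private lemma sigma_inv_pow_phi (B : ℕ) (hB : 2 ≤ B) (t k : ℕ) :
    ((intraLayer B * interLayer B)⁻¹ ^ t) (phi B hB k) =
      phi B hB (k + t * (2 * B - 2)) := by
  induction t generalizing k with
  | zero => simp
  | succ t ih =>
    rw [pow_succ', Equiv.Perm.mul_apply, ih, sigma_inv_phi]
    congr 1
    ring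

private lemma sigma_inv_pow_top (B : ℕ) (hB : 2 ≤ B) (t : ℕ) :
    ((intraLayer B * interLayer B)⁻¹ ^ t) ⟨2 * B - 1, by omega⟩ =
      (⟨2 * B - 1, by omega⟩ : Fin (2 * B)) := by
  induction t with
  | zero => simp
  | succ t ih =>
    rw [pow_succ', Equiv.Perm.mul_apply, ih, ← sigma_top B hB,
      Equiv.Perm.inv_def, Equiv.symm_apply_apply, sigma_top B hB]

private lemma phi_inj (B : ℕ) (hB : 2 ≤ B) (u v : ℕ)
    (h : phi B hB u = phi B hB v) : u % (2 * B - 1) = v % (2 * B - 1) := by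
  have hu : u % (2 * B - 1) < 2 * B - 1 := Nat.mod_lt _ (by omega)
  have hv : v % (2 * B - 1) < 2 * B - 1 := Nat.mod_lt _ (by omega)
  have hval := congrArg Fin.val h
  rw [phi_val, phi_val] at hval
  unfold phiF at hval
  split_ifs at hval <;> omega

private lemma phi_ne_top (B : ℕ) (hB : 2 ≤ B) (k : ℕ) :
    phi B hB k ≠ ⟨2 * B - 1, by omega⟩ := by
  intro h
  have hval := congrArg Fin.val h
  rw [phi_val] at hval
  have := phiF_lt B (k % (2 * B - 1)) hB (Nat.mod_lt _ (by omega))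
  simp at hval
  omega

private lemma mod_two_cases (x n : ℕ) (hn : 0 < n) (h : x < 2 * n) :
    x % n = x ∨ (n ≤ x ∧ x % n = x - n) := by
  rcases Nat.lt_or_ge x n with h' | h'
  · exact Or.inl (Nat.mod_eq_of_lt h')
  · exact Or.inr ⟨h', by rw [Nat.mod_eq_sub_mod h', Nat.mod_eq_of_lt (by omega)]⟩

private lemma cong_shift (n m a t₁ b t₂ : ℕ) (hnm : n = m + 1)
    (h : (a + t₁ * m) % n = (b + t₂ * m) % n) :
    (a + t₂) % n = (b + t₁) % n := by
  subst hnm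
  have h2 := congrArg (fun x => (x + (t₁ + t₂)) % (m + 1)) h
  rw [Nat.mod_add_mod, Nat.mod_add_mod] at h2
  have e1 : a + t₁ * m + (t₁ + t₂) = (a + t₂) + t₁ * (m + 1) := by ring
  have e2 : b + t₂ * m + (t₁ + t₂) = (b + t₁) + t₂ * (m + 1) := by ring
  rw [e1, e2, Nat.add_mul_mod_self_right, Nat.add_mul_mod_self_right] at h2
  exact h2

private lemma cong_eq (n x y : ℕ) (hn : 0 < n) (hx : x < 2 * n) (hy : y < 2 * n)
    (h : x % n = y % n) : x = y ∨ x = y + n ∨ y = x + n := by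
  have h1 := Nat.mod_lt x hn
  have h2 := Nat.mod_lt y hn
  rcases mod_two_cases x n hn hx with e1 | ⟨e1', e1⟩ <;>
    rcases mod_two_cases y n hn hy with e2 | ⟨e2', e2⟩ <;> omega


/-- For every `B ≥ 2` and every bus `j < B`, the unordered pairs of
columns occupying bus `j` at the successive double-steps of the busNNN strategy are
pairwise distinct over one full period: the map sending `t ∈ {0, …, 2B-2}` to the
unordered pair `{σ⁻ᵗ (2j), σ⁻ᵗ (2j+1)}` is injective, where `σ = A ∘ I`. -/
theorem busNNN_bus_pairs_distinct (B : ℕ) (hB : 2 ≤ B) (j : ℕ) (hj : j < B) :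
    ∀ t₁ t₂ : ℕ, t₁ ≤ 2 * B - 2 → t₂ ≤ 2 * B - 2 →
      ({((intraLayer B * interLayer B)⁻¹ ^ t₁) ⟨2 * j, by omega⟩,
        ((intraLayer B * interLayer B)⁻¹ ^ t₁) ⟨2 * j + 1, by omega⟩} : Finset (Fin (2 * B))) =
      ({((intraLayer B * interLayer B)⁻¹ ^ t₂) ⟨2 * j, by omega⟩,
        ((intraLayer B * interLayer B)⁻¹ ^ t₂) ⟨2 * j + 1, by omega⟩} : Finset (Fin (2 * B))) →
      t₁ = t₂ := by
  intro t₁ t₂ ht₁ ht₂ hpair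
  by_cases hjB : j = B - 1
  · -- last bus: second column is the fixed point 2B-1
    have hx : (⟨2 * j, by omega⟩ : Fin (2 * B)) = phi B hB B := by
      apply Fin.ext
      show 2 * j = (phi B hB B).1
      rw [phi_val, Nat.mod_eq_of_lt (by omega)]
      unfold phiF
      split_ifs <;> omega
    have hy : (⟨2 * j + 1, by omega⟩ : Fin (2 * B)) = (⟨2 * B - 1, by omega⟩ : Fin (2 * B)) :=
      Fin.ext (by simp; omega)
    rw [hx, hy, sigma_inv_pow_phi, sigma_inv_pow_phi, sigma_inv_pow_top B hB,
      sigma_inv_pow_top B hB] at hpair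
    have hmem : phi B hB (B + t₁ * (2 * B - 2)) ∈
        ({phi B hB (B + t₂ * (2 * B - 2)), ⟨2 * B - 1, by omega⟩} : Finset (Fin (2 * B))) := by
      rw [← hpair]; simp
    rcases Finset.mem_insert.mp hmem with heq | heq
    · have hcong := phi_inj B hB _ _ heq
      have hshift := cong_shift (2 * B - 1) (2 * B - 2) B t₁ B t₂ (by omega) hcong
      have := cong_eq (2 * B - 1) (B + t₂) (B + t₁) (by omega) (by omega) (by omega) hshift
      omega
    · exact absurd (Finset.mem_singleton.mp heq) (phi_ne_top B hB _)
  · -- ordinary bus: both columns are on the big cycle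
    obtain ⟨a, haa, h2ja⟩ : ∃ a, a < 2 * B - 1 ∧ phiF B a = 2 * j := by
      rcases eq_or_ne j 0 with rfl | hj0
      · exact ⟨0, by omega, by unfold phiF; simp⟩
      · exact ⟨2 * B - 1 - j, by omega, by unfold phiF; split_ifs <;> first | omega | exact (‹False›).elim⟩
    obtain ⟨b, hbb, h2jb⟩ : ∃ b, b < 2 * B - 1 ∧ phiF B b = 2 * j + 1 :=
      ⟨j + 1, by omega, by unfold phiF; split_ifs <;> first | omega | exact (‹False›).elim⟩
    have hx : (⟨2 * j, by omega⟩ : Fin (2 * B)) = phi B hB a := by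
      apply Fin.ext
      show 2 * j = (phi B hB a).1
      rw [phi_val, Nat.mod_eq_of_lt haa, h2ja]
    have hy : (⟨2 * j + 1, by omega⟩ : Fin (2 * B)) = phi B hB b := by
      apply Fin.ext
      show 2 * j + 1 = (phi B hB b).1
      rw [phi_val, Nat.mod_eq_of_lt hbb, h2jb]
    rw [hx, hy, sigma_inv_pow_phi, sigma_inv_pow_phi, sigma_inv_pow_phi,
      sigma_inv_pow_phi] at hpair
    have hmemb : phi B hB (b + t₁ * (2 * B - 2)) ∈
        ({phi B hB (a + t₂ * (2 * B - 2)), phi B hB (b + t₂ * (2 * B - 2))} :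
          Finset (Fin (2 * B))) := by
      rw [← hpair]; simp
    rcases Finset.mem_insert.mp hmemb with heqb | heqb
    · -- crossed (at least partially): look also at the first column
      have hmema : phi B hB (a + t₁ * (2 * B - 2)) ∈
          ({phi B hB (a + t₂ * (2 * B - 2)), phi B hB (b + t₂ * (2 * B - 2))} :
            Finset (Fin (2 * B))) := by
        rw [← hpair]; simp
      rcases Finset.mem_insert.mp hmema with heqa | heqa
      · -- straight on a
        have hcong := phi_inj B hB _ _ heqa
        have hshift := cong_shift (2 * B - 1) (2 * B - 2) a t₁ a t₂ (by omega) hcong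
        have := cong_eq (2 * B - 1) (a + t₂) (a + t₁) (by omega) (by omega) (by omega) hshift
        omega
      · -- fully crossed
        have hconga := phi_inj B hB _ _ (Finset.mem_singleton.mp heqa)
        have hcongb := phi_inj B hB _ _ heqb
        have hsa := cong_shift (2 * B - 1) (2 * B - 2) a t₁ b t₂ (by omega) hconga
        have hsb := cong_shift (2 * B - 1) (2 * B - 2) b t₁ a t₂ (by omega) hcongb
        have ha' := cong_eq (2 * B - 1) (a + t₂) (b + t₁) (by omega) (by omega) (by omega) hsa
        have hb' := cong_eq (2 * B - 1) (b + t₂) (a + t₁) (by omega) (by omega) (by omega) hsb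
        omega
    · -- straight on b
      have hcong := phi_inj B hB _ _ (Finset.mem_singleton.mp heqb)
      have hshift := cong_shift (2 * B - 1) (2 * B - 2) b t₁ b t₂ (by omega) hcong
      have := cong_eq (2 * B - 1) (b + t₂) (b + t₁) (by omega) (by omega) (by omega) hshift
      omega
end
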